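/- For any real A with 0 ≤ A and A ≠ 1, and any real χ, the integral (1/2π) ∫₀^{2π} (A² - 1)/(1 + A² + 2A cos(2φ + χ)) dφ equals 1 if A > 1 and equals -1 if A < 1. -/

import Mathlib

open Real intervalIntegral

/-- The degree integral of the linear skyrmion solution: for `0 ≤ A`, `A ≠ 1`,
`(1/2π) ∫₀^{2π} (A²-1)/(1+A²+2A cos(2φ+χ)) dφ` equals `1` if `A > 1` and `-1` if `A < 1`. -/
theorem degree_integral_linear_solution (A χ : ℝ) (hA : 0 ≤ A) (hA1 : A ≠ 1) :
    (1 / (2 * π)) * ∫ φ in (0:ℝ)..(2 * π),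
        (A ^ 2 - 1) / (1 + A ^ 2 + 2 * A * Real.cos (2 * φ + χ)) =
      if 1 < A then 1 else -1 := by
  have hπ : (0:ℝ) < π := Real.pi_pos
  have h0 : 1 - A ≠ 0 := by intro h; apply hA1; linarith
  have hden : ∀ u : ℝ, 0 < 1 + A ^ 2 + 2 * A * Real.cos u := by
    intro u
    nlinarith [sq_nonneg (1-A), (by rcases lt_or_gt_of_ne hA1 with h|h <;> nlinarith : (0:ℝ) < (1-A)^2),
      mul_nonneg hA (by linarith [Real.neg_one_le_cos u] : (0:ℝ) ≤ Real.cos u + 1)]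
  have hcont : Continuous fun φ : ℝ =>
      (A ^ 2 - 1) / (1 + A ^ 2 + 2 * A * Real.cos (2 * φ + χ)) := by
    apply continuous_const.div
    · continuity
    · intro x; exact (hden _).ne'
  have hii : IntervalIntegrable
      (fun φ : ℝ => (A ^ 2 - 1) / (1 + A ^ 2 + 2 * A * Real.cos (2 * φ + χ)))
      MeasureTheory.volume 0 (2 * π) := hcont.intervalIntegrable _ _
  have hlin : ∀ φ : ℝ, HasDerivAt (fun φ : ℝ => 2 * φ + χ) 2 φ := by
    intro φ
    simpa using ((hasDerivAt_id φ).const_mul 2).add_const χ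
  rcases lt_or_gt_of_ne hA1 with hlt | hgt
  · -- A < 1
    rw [if_neg (not_lt.mpr hlt.le)]
    have key : ∀ φ : ℝ, HasDerivAt
        (fun φ : ℝ => -φ + Real.arctan (A * Real.sin (2 * φ + χ) / (1 + A * Real.cos (2 * φ + χ))))
        ((A ^ 2 - 1) / (1 + A ^ 2 + 2 * A * Real.cos (2 * φ + χ))) φ := by
      intro φ
      set u := 2 * φ + χ with hu
      have hd : 0 < 1 + A * Real.cos u := by
        nlinarith [Real.neg_one_le_cos u]
      have hs : HasDerivAt (fun φ : ℝ => Real.sin (2 * φ + χ)) (Real.cos u * 2) φ :=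
        by have := (Real.hasDerivAt_sin u).comp φ (hlin φ); exact this
      have hc : HasDerivAt (fun φ : ℝ => Real.cos (2 * φ + χ)) (-Real.sin u * 2) φ :=
        by have := (Real.hasDerivAt_cos u).comp φ (hlin φ); exact this
      have hq : HasDerivAt
          (fun φ : ℝ => A * Real.sin (2 * φ + χ) / (1 + A * Real.cos (2 * φ + χ)))
          ((A * (Real.cos u * 2) * (1 + A * Real.cos u)
              - A * Real.sin u * (A * (-Real.sin u * 2))) / (1 + A * Real.cos u) ^ 2) φ :=
        (hs.const_mul A).div ((hc.const_mul A).const_add 1) hd.ne'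
      have ha := (Real.hasDerivAt_arctan (A * Real.sin u / (1 + A * Real.cos u))).comp φ hq
      have h := ((hasDerivAt_id φ).neg).add ha
      refine h.congr_deriv ?_
      symm
      have hsc := Real.sin_sq_add_cos_sq u
      field_simp [(hden u).ne']
      rw [div_eq_iff (ne_of_gt (by linarith [hden u]))]
      linear_combination (-2*A^2-2*A^3*Real.cos u) * hsc
    rw [intervalIntegral.integral_eq_sub_of_hasDerivAt (fun φ _ => key φ) hii]
    have e1 : 2 * (2 * π) + χ = χ + 2 * π + 2 * π := by ring
    have e2 : 2 * (0:ℝ) + χ = χ := by ring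
    simp only [e1, e2, Real.sin_add_two_pi, Real.cos_add_two_pi]
    field_simp
    ring
  · -- A > 1
    rw [if_pos hgt]
    have key : ∀ φ : ℝ, HasDerivAt
        (fun φ : ℝ => φ - Real.arctan (Real.sin (2 * φ + χ) / (A + Real.cos (2 * φ + χ))))
        ((A ^ 2 - 1) / (1 + A ^ 2 + 2 * A * Real.cos (2 * φ + χ))) φ := by
      intro φ
      set u := 2 * φ + χ with hu
      have hd : 0 < A + Real.cos u := by
        nlinarith [Real.neg_one_le_cos u]
      have hs : HasDerivAt (fun φ : ℝ => Real.sin (2 * φ + χ)) (Real.cos u * 2) φ :=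
        by have := (Real.hasDerivAt_sin u).comp φ (hlin φ); exact this
      have hc : HasDerivAt (fun φ : ℝ => Real.cos (2 * φ + χ)) (-Real.sin u * 2) φ :=
        by have := (Real.hasDerivAt_cos u).comp φ (hlin φ); exact this
      have hq : HasDerivAt
          (fun φ : ℝ => Real.sin (2 * φ + χ) / (A + Real.cos (2 * φ + χ)))
          ((Real.cos u * 2 * (A + Real.cos u)
              - Real.sin u * (-Real.sin u * 2)) / (A + Real.cos u) ^ 2) φ :=
        hs.div (hc.const_add A) hd.ne'
      have ha := (Real.hasDerivAt_arctan (Real.sin u / (A + Real.cos u))).comp φ hq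
      have h := (hasDerivAt_id φ).sub ha
      refine h.congr_deriv ?_
      symm
      have hsc := Real.sin_sq_add_cos_sq u
      field_simp [(hden u).ne']
      rw [div_eq_iff (ne_of_gt (by linarith [hden u]))]
      linear_combination (2*A*(A+Real.cos u)) * hsc
    rw [intervalIntegral.integral_eq_sub_of_hasDerivAt (fun φ _ => key φ) hii]
    have e1 : 2 * (2 * π) + χ = χ + 2 * π + 2 * π := by ring
    have e2 : 2 * (0:ℝ) + χ = χ := by ring
    simp only [e1, e2, Real.sin_add_two_pi, Real.cos_add_two_pi]
    field_simp
    ring
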